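/- Let c ∈ ℝⁿ, b ∈ ℝᵐ, A ∈ ℝ^{m×n}. Let P be the LP max{cᵀx : Ax ≤ b, x ≥ 0} and let its complement P̄ be the LP min{cᵀx : (bcᵀ − A)x ≥ b, x ≥ 0}. If P attains an optimal value Opt(P) > 1, then P̄ has a feasible solution with objective value at most Opt(P)/(Opt(P)−1); in fact if x is optimal for P with value 1+a (a>0), then (1/a)x is feasible for P̄ with value 1+1/a. -/

import Mathlib

open Matrix

/-- LP complementation: if `P = max {cᵀx : Ax ≤ b, x ≥ 0}` attains optimal value
`1 + a > 1` at `x`, then `(1/a) • x` is feasible for the complement LP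
`min {cᵀx : (bcᵀ - A)x ≥ b, x ≥ 0}` with value `1 + 1/a ≤ Opt(P)/(Opt(P) - 1)`. -/
theorem stmt0 {m n : ℕ} (A : Matrix (Fin m) (Fin n) ℝ) (b : Fin m → ℝ) (c : Fin n → ℝ)
    (x : Fin n → ℝ) (a : ℝ) (ha : 0 < a)
    (hxfeas : A.mulVec x ≤ b ∧ 0 ≤ x)
    (hopt : IsGreatest {v : ℝ | ∃ y : Fin n → ℝ, A.mulVec y ≤ b ∧ 0 ≤ y ∧ v = c ⬝ᵥ y} (1 + a))
    (hxval : c ⬝ᵥ x = 1 + a) :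
    (0 ≤ a⁻¹ • x ∧ b ≤ (Matrix.of fun i j => b i * c j - A i j).mulVec (a⁻¹ • x)) ∧
      c ⬝ᵥ (a⁻¹ • x) = 1 + a⁻¹ ∧ c ⬝ᵥ (a⁻¹ • x) ≤ (1 + a) / ((1 + a) - 1) := by
  obtain ⟨hAx, hx0⟩ := hxfeas
  have ha' : a ≠ 0 := ne_of_gt ha
  have hval : c ⬝ᵥ (a⁻¹ • x) = 1 + a⁻¹ := by
    rw [dotProduct_smul, smul_eq_mul, hxval]
    field_simp
    ring
  refine ⟨⟨?_, ?_⟩, hval, ?_⟩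
  · intro j
    exact smul_nonneg (le_of_lt (inv_pos.mpr ha)) (hx0 j)
  · intro i
    have key : (Matrix.of fun i j => b i * c j - A i j).mulVec (a⁻¹ • x) i
        = a⁻¹ * (b i * (c ⬝ᵥ x) - A.mulVec x i) := by
      simp only [mulVec, dotProduct, of_apply, Pi.smul_apply, smul_eq_mul, mul_sub,
        Finset.mul_sum]
      rw [← Finset.sum_sub_distrib]
      exact Finset.sum_congr rfl fun j _ => by ring
    rw [key, hxval]
    have hAi := hAx i
    have : a⁻¹ * (b i * (1 + a) - A.mulVec x i) ≥ a⁻¹ * (b i * (1 + a) - b i) := by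
      apply mul_le_mul_of_nonneg_left _ (le_of_lt (inv_pos.mpr ha))
      linarith
    calc b i = a⁻¹ * (b i * (1 + a) - b i) := by field_simp; ring
      _ ≤ _ := this
  · rw [hval]
    have : (1 + a) / ((1 + a) - 1) = 1 + a⁻¹ := by rw [add_sub_cancel_left, add_div, div_self ha']; ring
    rw [this]
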